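/- Let n ≥ 7 and let x₁,…,xₙ be real numbers with 0 ≤ xᵢ ≤ π and Σ xᵢ = (n−2)π. Then Σ cos(xᵢ) ≥ n·cos((n−2)π/n). -/

import Mathlib

open Real

/-- f 0 ≤ f x for x ≥ 0 when f' ≥ 0 on positives -/
lemma mono_from_deriv {f f' : ℝ → ℝ} (hd : ∀ t, HasDerivAt f (f' t) t)
    (h0 : ∀ t, 0 < t → 0 ≤ f' t) {x : ℝ} (hx : 0 ≤ x) : f 0 ≤ f x := by
  have hm : MonotoneOn f (Set.Ici 0) := by
    apply monotoneOn_of_deriv_nonneg (convex_Ici 0)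
    · exact (Differentiable.continuous (fun t => (hd t).differentiableAt)).continuousOn
    · intro t ht
      exact ((hd t).differentiableAt).differentiableWithinAt
    · intro t ht
      rw [interior_Ici] at ht
      rw [(hd t).deriv]
      exact h0 t ht
  exact hm (Set.self_mem_Ici) hx hx

lemma sin_lb {x : ℝ} (hx : 0 ≤ x) : x - x^3/6 ≤ Real.sin x := by
  have := mono_from_deriv (f := fun t => Real.sin t - t + t^3/6)
    (f' := fun t => Real.cos t - 1 + t^2/2)
    (fun t => by
      have h1 := Real.hasDerivAt_sin t
      have h2 : HasDerivAt (fun t : ℝ => t^3/6) (t^2/2) t := by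
        have := (hasDerivAt_pow 3 t).div_const 6
        exact this.congr_deriv (by ring)
      have := (h1.sub (hasDerivAt_id t)).add h2
      exact this.congr_deriv (by ring))
    (fun t _ => by nlinarith [Real.one_sub_sq_div_two_le_cos (x := t)]) hx
  simp at this
  linarith

lemma cos_ub {x : ℝ} (hx : 0 ≤ x) : Real.cos x ≤ 1 - x^2/2 + x^4/24 := by
  have := mono_from_deriv (f := fun t => 1 - t^2/2 + t^4/24 - Real.cos t)
    (f' := fun t => -t + t^3/6 + Real.sin t)
    (fun t => by
      have h2 : HasDerivAt (fun t : ℝ => t^2/2) t t := by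
        have := (hasDerivAt_pow 2 t).div_const 2
        exact this.congr_deriv (by ring)
      have h4 : HasDerivAt (fun t : ℝ => t^4/24) (t^3/6) t := by
        have := (hasDerivAt_pow 4 t).div_const 24
        exact this.congr_deriv (by ring)
      have := (((hasDerivAt_const t (1:ℝ)).sub h2).add h4).sub (Real.hasDerivAt_cos t)
      exact this.congr_deriv (by ring))
    (fun t ht => by nlinarith [sin_lb ht.le]) hx
  simp at this
  linarith

lemma sin_ub {x : ℝ} (hx : 0 ≤ x) : Real.sin x ≤ x - x^3/6 + x^5/120 := by
  have := mono_from_deriv (f := fun t => t - t^3/6 + t^5/120 - Real.sin t)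
    (f' := fun t => 1 - t^2/2 + t^4/24 - Real.cos t)
    (fun t => by
      have h3 : HasDerivAt (fun t : ℝ => t^3/6) (t^2/2) t := by
        have := (hasDerivAt_pow 3 t).div_const 6
        exact this.congr_deriv (by ring)
      have h5 : HasDerivAt (fun t : ℝ => t^5/120) (t^4/24) t := by
        have := (hasDerivAt_pow 5 t).div_const 120
        exact this.congr_deriv (by ring)
      have := (((hasDerivAt_id t).sub h3).add h5).sub (Real.hasDerivAt_sin t)
      exact this.congr_deriv (by ring))
    (fun t ht => by nlinarith [cos_ub ht.le]) hx
  simp at this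
  linarith


/-- Tangent line to cos at ψ from above, valid on [0, π-ψ] always, and on all
    of [0,π] when sin ψ * (π - ψ) ≤ 1 + cos ψ. -/
lemma tangent_ub (ψ s : ℝ) (hψ0 : 0 < ψ) (hψ1 : ψ ≤ Real.pi/2)
    (hs0 : 0 ≤ s) (hs1 : s ≤ Real.pi)
    (hv : s ≤ Real.pi - ψ ∨ Real.sin ψ * (Real.pi - ψ) ≤ 1 + Real.cos ψ) :
    Real.cos s ≤ Real.cos ψ - Real.sin ψ * (s - ψ) := by
  have hπ := Real.pi_pos
  set f : ℝ → ℝ := fun t => Real.cos ψ - Real.sin ψ * (t - ψ) - Real.cos t with hf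
  have hderiv : ∀ t : ℝ, HasDerivAt f (Real.sin t - Real.sin ψ) t := by
    intro t
    have h1 : HasDerivAt (fun t : ℝ => Real.cos ψ - Real.sin ψ * (t - ψ)) (-Real.sin ψ) t := by
      have := (((hasDerivAt_id t).sub_const ψ).const_mul (Real.sin ψ)).const_sub (Real.cos ψ)
      simpa using this
    have := h1.sub (Real.hasDerivAt_cos t)
    exact this.congr_deriv (by ring)
  have hcont : Continuous f := by
    have : Differentiable ℝ f := fun t => (hderiv t).differentiableAt
    exact this.continuous
  have hfψ : f ψ = 0 := by simp [hf]
  have key : 0 ≤ f s := by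
    rcases le_total s ψ with hsψ | hsψ
    · -- f antitone on [0, ψ]
      have hanti : AntitoneOn f (Set.Icc 0 ψ) := by
        apply antitoneOn_of_deriv_nonpos (convex_Icc _ _) hcont.continuousOn
        · exact fun t _ => ((hderiv t).differentiableAt).differentiableWithinAt
        · intro t ht
          rw [interior_Icc] at ht
          rw [(hderiv t).deriv]
          have : Real.sin t ≤ Real.sin ψ :=
            Real.sin_le_sin_of_le_of_le_pi_div_two (by linarith [ht.1]) hψ1 ht.2.le
          linarith
      have := hanti ⟨hs0, hsψ⟩ ⟨le_trans hs0 hsψ, le_refl ψ⟩ hsψ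
      rw [hfψ] at this; linarith
    · rcases le_or_gt s (Real.pi - ψ) with hsv | hsv
      · -- f monotone on [ψ, π - ψ]
        have hmono : MonotoneOn f (Set.Icc ψ (Real.pi - ψ)) := by
          apply monotoneOn_of_deriv_nonneg (convex_Icc _ _) hcont.continuousOn
          · exact fun t _ => ((hderiv t).differentiableAt).differentiableWithinAt
          · intro t ht
            rw [interior_Icc] at ht
            rw [(hderiv t).deriv]
            have : Real.sin ψ ≤ Real.sin t := by
              rcases le_total t (Real.pi/2) with h | h
              · exact Real.sin_le_sin_of_le_of_le_pi_div_two (by linarith) h ht.1.le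
              · rw [← Real.sin_pi_sub t]
                exact Real.sin_le_sin_of_le_of_le_pi_div_two (by linarith) (by linarith)
                  (by linarith [ht.2])
            linarith
        have := hmono ⟨le_refl ψ, by linarith⟩ ⟨hsψ, hsv⟩ hsψ
        rw [hfψ] at this; linarith
      · -- f antitone on [π - ψ, π], bound via f π ≥ 0 using hv
        rcases hv with hv | hv
        · linarith
        have hanti : AntitoneOn f (Set.Icc (Real.pi - ψ) Real.pi) := by
          apply antitoneOn_of_deriv_nonpos (convex_Icc _ _) hcont.continuousOn
          · exact fun t _ => ((hderiv t).differentiableAt).differentiableWithinAt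
          · intro t ht
            rw [interior_Icc] at ht
            rw [(hderiv t).deriv]
            have : Real.sin t ≤ Real.sin ψ := by
              rw [← Real.sin_pi_sub t]
              exact Real.sin_le_sin_of_le_of_le_pi_div_two (by linarith [ht.2]) hψ1
                (by linarith [ht.1])
            linarith
        have := hanti ⟨hsv.le, hs1⟩ ⟨by linarith, le_refl _⟩ hs1
        have hfπ : 0 ≤ f Real.pi := by
          simp only [hf, Real.cos_pi]
          nlinarith
        linarith
  simp only [hf] at key
  linarith

lemma H_quarter (ψ : ℝ) (h0 : 0 < ψ) (h1 : ψ ≤ Real.pi/4) :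
    Real.sin ψ * (Real.pi - ψ) ≤ 1 + Real.cos ψ := by
  have hπl : (3.141592 : ℝ) ≤ Real.pi := by
    have := Real.pi_gt_d6; linarith
  have hπu : Real.pi ≤ 3.141593 := by
    linarith [Real.pi_lt_d6]
  have hψu : ψ ≤ 0.786 := by nlinarith
  have hs := sin_ub h0.le
  have hc := Real.one_sub_sq_div_two_le_cos (x := ψ)
  have hsn : 0 ≤ Real.sin ψ := Real.sin_nonneg_of_nonneg_of_le_pi h0.le (by nlinarith)
  have hpb : 0 < Real.pi - ψ := by nlinarith
  have hBn : Real.sin ψ ≤ ψ - ψ^3/6 + ψ^5/120 := hs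
  have key : (ψ - ψ^3/6 + ψ^5/120) * (Real.pi - ψ) ≤ 2 - ψ^2/2 := by
    nlinarith [sq_nonneg ψ, sq_nonneg (ψ - 0.786), mul_nonneg h0.le h0.le,
      mul_nonneg (mul_nonneg h0.le h0.le) h0.le, sq_nonneg (ψ*ψ),
      mul_nonneg (mul_nonneg (mul_nonneg h0.le h0.le) h0.le) h0.le]
  calc Real.sin ψ * (Real.pi - ψ) ≤ (ψ - ψ^3/6 + ψ^5/120) * (Real.pi - ψ) := by
        exact mul_le_mul_of_nonneg_right hBn hpb.le
    _ ≤ 2 - ψ^2/2 := key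
    _ ≤ 1 + Real.cos ψ := by linarith





set_option maxHeartbeats 2000000 in
theorem polygon_cos_sum_bound_large (n : ℕ) (hn : 7 ≤ n) (x : Fin n → ℝ)
    (hx0 : ∀ i, 0 ≤ x i) (hxpi : ∀ i, x i ≤ Real.pi)
    (hsum : ∑ i, x i = (n - 2) * Real.pi) :
    ∑ i, Real.cos (x i) ≥ n * Real.cos ((n - 2) * Real.pi / n) := by
  have hπ := Real.pi_pos
  have hπl : (3.141592 : ℝ) ≤ Real.pi := by linarith [Real.pi_gt_d6]
  have hπu : Real.pi ≤ 3.141593 := by linarith [Real.pi_lt_d6]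
  have hn7 : (7:ℝ) ≤ (n:ℝ) := by exact_mod_cast hn
  have hnpos : (0:ℝ) < n := by linarith
  set φ : ℝ := 2 * Real.pi / n with hφ
  have hφpos : 0 < φ := by positivity
  have hφ7 : φ ≤ 2 * Real.pi / 7 := by
    rw [hφ, div_le_div_iff₀ hnpos (by norm_num)]
    nlinarith
  have hφhalf : φ ≤ Real.pi / 2 := by nlinarith
  have hcosθ : Real.cos (((n:ℝ) - 2) * Real.pi / n) = - Real.cos φ := by
    have h : ((n:ℝ) - 2) * Real.pi / n = Real.pi - φ := by
      rw [hφ]; field_simp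
    rw [h, Real.cos_pi_sub]
  obtain ⟨s, hsdef⟩ : ∃ s : Fin n → ℝ, ∀ i, s i = Real.pi - x i :=
    ⟨fun i => Real.pi - x i, fun i => rfl⟩
  have hs0 : ∀ i, 0 ≤ s i := fun i => by rw [hsdef i]; linarith [hxpi i]
  have hs1 : ∀ i, s i ≤ Real.pi := fun i => by rw [hsdef i]; linarith [hx0 i]
  have hcard : ((Finset.univ : Finset (Fin n)).card : ℝ) = n := by simp
  have hssum : ∑ i, s i = 2 * Real.pi := by
    rw [Finset.sum_congr rfl (fun i _ => hsdef i)]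
    rw [Finset.sum_sub_distrib, hsum, Finset.sum_const, nsmul_eq_mul, hcard]
    ring
  have hnφ : (n:ℝ) * φ = 2 * Real.pi := by
    rw [hφ]; field_simp
  have tang_sum : (∀ i, Real.cos (s i) ≤ Real.cos φ - Real.sin φ * (s i - φ)) →
      ∑ i, Real.cos (s i) ≤ (n:ℝ) * Real.cos φ := by
    intro key
    have h1 : ∑ i, (s i - φ) = 0 := by
      rw [Finset.sum_sub_distrib, hssum, Finset.sum_const, nsmul_eq_mul, hcard]
      linarith
    calc ∑ i, Real.cos (s i) ≤ ∑ i, (Real.cos φ - Real.sin φ * (s i - φ)) :=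
          Finset.sum_le_sum (fun i _ => key i)
      _ = (n:ℝ) * Real.cos φ := by
          rw [Finset.sum_sub_distrib, Finset.sum_const, nsmul_eq_mul, hcard,
            ← Finset.mul_sum, h1]
          ring
  have main : ∑ i, Real.cos (s i) ≤ (n:ℝ) * Real.cos φ := by
    by_cases h8 : 8 ≤ n
    · have h8' : (8:ℝ) ≤ (n:ℝ) := by exact_mod_cast h8
      have hφ4 : φ ≤ Real.pi/4 := by
        rw [hφ, div_le_div_iff₀ hnpos (by norm_num)]
        nlinarith
      exact tang_sum (fun i => tangent_ub φ (s i) hφpos hφhalf (hs0 i) (hs1 i)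
        (Or.inr (H_quarter φ hφpos hφ4)))
    · have hne : n = 7 := by omega
      subst hne
      have hn7e : ((7:ℕ):ℝ) = 7 := by norm_num
      by_cases hb : ∀ i, s i ≤ Real.pi - φ
      · exact tang_sum (fun i => tangent_ub φ (s i) hφpos hφhalf (hs0 i) (hs1 i)
          (Or.inl (hb i)))
      · push_neg at hb
        obtain ⟨i₀, hi₀⟩ := hb
        have hφ27 : φ = 2 * Real.pi / 7 := by rw [hφ, hn7e]
        have hu0 : 0 ≤ Real.pi - s i₀ := by linarith [hs1 i₀]
        have huφ : Real.pi - s i₀ ≤ φ := by linarith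
        -- bound for the bad index
        have hb1 : Real.cos (s i₀) ≤ -1 + (Real.pi - s i₀)^2/2 := by
          have h := Real.one_sub_sq_div_two_le_cos (x := Real.pi - s i₀)
          rw [Real.cos_pi_sub] at h
          linarith
        -- sqrt 3 bounds
        have hsq3l : (1.732050 : ℝ) ≤ Real.sqrt 3 := by
          nlinarith [Real.sq_sqrt (by norm_num : (0:ℝ) ≤ 3), Real.sqrt_nonneg 3]
        have hsq3u : Real.sqrt 3 ≤ 1.7320509 := by
          nlinarith [Real.sq_sqrt (by norm_num : (0:ℝ) ≤ 3), Real.sqrt_nonneg 3]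
        -- line at π/6 for everyone
        have hb2 : ∀ j, Real.cos (s j) ≤ Real.sqrt 3/2 - (1/2)*(s j - Real.pi/6) := by
          intro j
          have h6 : Real.sin (Real.pi/6) * (Real.pi - Real.pi/6) ≤ 1 + Real.cos (Real.pi/6) := by
            rw [Real.sin_pi_div_six, Real.cos_pi_div_six]
            nlinarith
          have h := tangent_ub (Real.pi/6) (s j) (by positivity) (by linarith)
            (hs0 j) (hs1 j) (Or.inr h6)
          rw [Real.sin_pi_div_six, Real.cos_pi_div_six] at h
          linarith
        -- split the sum
        have hsplit : Real.cos (s i₀) + ∑ j ∈ Finset.univ.erase i₀, Real.cos (s j)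
            = ∑ i, Real.cos (s i) :=
          Finset.add_sum_erase _ (fun j => Real.cos (s j)) (Finset.mem_univ i₀)
        have hserase : s i₀ + ∑ j ∈ Finset.univ.erase i₀, s j = 2 * Real.pi := by
          rw [Finset.add_sum_erase _ s (Finset.mem_univ i₀), hssum]
        have hcard6 : ((Finset.univ.erase i₀).card : ℝ) = 6 := by
          rw [Finset.card_erase_of_mem (Finset.mem_univ i₀)]
          simp
        have hrest : ∑ j ∈ Finset.univ.erase i₀, Real.cos (s j) ≤
            6*(Real.sqrt 3/2 + Real.pi/12) - (1/2)*(2*Real.pi - s i₀) := by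
          calc ∑ j ∈ Finset.univ.erase i₀, Real.cos (s j)
              ≤ ∑ j ∈ Finset.univ.erase i₀, (Real.sqrt 3/2 + Real.pi/12 - (1/2) * s j) :=
                Finset.sum_le_sum (fun j _ => by linarith [hb2 j])
            _ = 6*(Real.sqrt 3/2 + Real.pi/12) - (1/2)*(2*Real.pi - s i₀) := by
                rw [Finset.sum_sub_distrib, Finset.sum_const, nsmul_eq_mul, hcard6,
                  ← Finset.mul_sum]
                have : ∑ j ∈ Finset.univ.erase i₀, s j = 2 * Real.pi - s i₀ := by
                  linarith
                rw [this]
        -- numeric facts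
        have hsin7u : Real.sin (Real.pi/7) ≤ 0.43389 := by
          have h := sin_ub (show (0:ℝ) ≤ Real.pi/7 by positivity)
          have hl : (0.448798:ℝ) ≤ Real.pi/7 := by linarith
          have hu : Real.pi/7 ≤ 0.448799 := by linarith
          have h3 : (0.448798:ℝ)^3 ≤ (Real.pi/7)^3 := by
            apply pow_le_pow_left₀ (by norm_num) hl
          have h5 : (Real.pi/7)^5 ≤ (0.448799:ℝ)^5 := by
            apply pow_le_pow_left₀ (by positivity) hu
          nlinarith [h, h3, h5]
        have hsin7l : 0 ≤ Real.sin (Real.pi/7) :=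
          Real.sin_nonneg_of_nonneg_of_le_pi (by positivity) (by linarith)
        have hcos27 : Real.cos φ = 1 - 2 * Real.sin (Real.pi/7) ^ 2 := by
          have h : φ = 2 * (Real.pi/7) := by rw [hφ27]; ring
          rw [h, Real.cos_two_mul']
          nlinarith [Real.sin_sq_add_cos_sq (Real.pi/7)]
        -- finish
        rw [hn7e, hcos27]
        have husq : (Real.pi - s i₀)^2 ≤ (Real.pi - s i₀) := by
          nlinarith
        have hs2 : Real.sin (Real.pi/7)^2 ≤ 0.1882606 := by nlinarith
        have hcomb := add_le_add hb1 hrest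
        rw [hsplit] at hcomb
        have hfinal : (∑ i, Real.cos (s i)) ≤ -1 + 3*Real.sqrt 3 := by
          nlinarith [hcomb, husq, hu0, huφ]
        linarith only [hfinal, hsq3u, hs2]
  rw [ge_iff_le, hcosθ]
  have hxs : ∀ i, Real.cos (x i) = - Real.cos (s i) := by
    intro i
    have h : x i = Real.pi - s i := by rw [hsdef i]; ring
    rw [h, Real.cos_pi_sub]
  rw [Finset.sum_congr rfl (fun i _ => hxs i), Finset.sum_neg_distrib]
  linarith
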